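/- Let K be the 3×3 real antisymmetric matrix K = [[0, −k_z, k_y], [k_z, 0, −k_x], [−k_y, k_x, 0]] for a wave vector k = (k_x, k_y, k_z), and let Δt > 0 satisfy Δt·|k| < 2. Then every eigenvalue λ of the 6×6 block matrix M = [[I, −Δt·i·K], [Δt·i·K, I + Δt²·K²]] (blocks 3×3, I the identity) satisfies |λ| = 1. -/

import Mathlib

open Matrix Polynomial

set_option maxHeartbeats 1000000

private lemma eval_charpoly'' {n : Type*} [DecidableEq n] [Fintype n]
    (M : Matrix n n ℂ) (μ : ℂ) :
    M.charpoly.eval μ = (μ • (1 : Matrix n n ℂ) - M).det := by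
  rw [Matrix.charpoly, ← coe_evalRingHom, RingHom.map_det]
  congr 1
  ext i j
  by_cases h : i = j
  · subst h
    simp [charmatrix_apply_eq, Matrix.one_apply]
  · simp [charmatrix_apply_ne _ _ _ h, Matrix.one_apply_ne h]

private lemma abs_eq_one_of_quad (c : ℝ) (hc1 : -2 < c) (hc2 : c ≤ 2) (μ : ℂ)
    (h : μ ^ 2 - (c : ℂ) * μ + 1 = 0) : ‖μ‖ = 1 := by
  have hconj : (starRingEnd ℂ) μ ^ 2 - (c : ℂ) * (starRingEnd ℂ) μ + 1 = 0 := by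
    have := congrArg (starRingEnd ℂ) h
    simpa [map_add, map_sub, _root_.map_mul, map_pow, Complex.conj_ofReal] using this
  have hfac : (μ - (starRingEnd ℂ) μ) * (μ + (starRingEnd ℂ) μ - c) = 0 := by
    have := sub_eq_zero.mpr (h.trans hconj.symm)
    linear_combination this
  rcases mul_eq_zero.mp hfac with h1 | h2
  · have hre : μ = (μ.re : ℂ) := by
      have := sub_eq_zero.mp h1
      exact (Complex.conj_eq_iff_re.mp this.symm).symm
    set x := μ.re with hx
    have hxeq : x ^ 2 - c * x + 1 = 0 := by
      have := h
      rw [hre] at this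
      exact_mod_cast this
    have hsq : (2 * x - c) ^ 2 = c ^ 2 - 4 := by nlinarith [hxeq]
    have hcc : c = 2 := by nlinarith [sq_nonneg (2 * x - c)]
    have : x = 1 := by nlinarith [hsq, hcc]
    rw [hre, this]
    simp
  · have hmc : μ * (starRingEnd ℂ) μ = 1 := by
      have h2' : (starRingEnd ℂ) μ = (c : ℂ) - μ := by linear_combination h2
      rw [h2']
      linear_combination -h
    have : (Complex.normSq μ : ℂ) = 1 := by rw [← Complex.mul_conj]; exact hmc
    have hn : Complex.normSq μ = 1 := by exact_mod_cast this
    rw [← Complex.sq_norm] at hn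
    nlinarith [norm_nonneg μ]

theorem stmt_3 (kx ky kz Δt : ℝ) (hΔt : 0 < Δt)
    (hcfl : Δt * Real.sqrt (kx ^ 2 + ky ^ 2 + kz ^ 2) < 2)
    (K : Matrix (Fin 3) (Fin 3) ℂ)
    (hK : K = !![(0 : ℂ), (-kz : ℝ), ((ky : ℝ) : ℂ);
                 ((kz : ℝ) : ℂ), 0, ((-kx : ℝ) : ℂ);
                 ((-ky : ℝ) : ℂ), ((kx : ℝ) : ℂ), 0])
    (M : Matrix (Fin 3 ⊕ Fin 3) (Fin 3 ⊕ Fin 3) ℂ)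
    (hM : M = Matrix.fromBlocks 1 (-(((Δt : ℂ) * Complex.I) • K))
        (((Δt : ℂ) * Complex.I) • K) (1 + ((Δt : ℂ) ^ 2) • K ^ 2)) :
    ∀ μ : ℂ, M.charpoly.IsRoot μ → ‖μ‖ = 1 := by
  intro μ hroot
  by_cases hμ : μ = 1
  · subst hμ; simp
  set a : ℂ := (Δt : ℂ) * Complex.I with ha
  set t : ℂ := (Δt : ℂ) with ht
  set w : ℂ := μ - 1 with hw
  have hw0 : w ≠ 0 := sub_ne_zero.mpr hμ
  have ha2 : a ^ 2 = -t ^ 2 := by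
    rw [ha]
    have : Complex.I ^ 2 = -1 := Complex.I_sq
    linear_combination t ^ 2 * this
  set γ : ℂ := t ^ 2 + w⁻¹ * t ^ 2 with hγ
  set s : ℂ := (kx : ℂ) ^ 2 + (ky : ℂ) ^ 2 + (kz : ℂ) ^ 2 with hs
  -- determinant is zero
  have h0 : (μ • (1 : Matrix (Fin 3 ⊕ Fin 3) (Fin 3 ⊕ Fin 3) ℂ) - M).det = 0 := by
    rw [← eval_charpoly'']; exact hroot
  -- block form
  have hN : μ • (1 : Matrix (Fin 3 ⊕ Fin 3) (Fin 3 ⊕ Fin 3) ℂ) - M =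
      Matrix.fromBlocks (w • (1 : Matrix (Fin 3) (Fin 3) ℂ)) (a • K)
        (-(a • K)) (w • 1 - (t ^ 2) • K ^ 2) := by
    subst hM
    ext (i | i) (j | j) <;>
      simp [Matrix.fromBlocks, Matrix.one_apply, hw, sub_smul] <;> ring_nf
  -- invertibility of the top-left block
  have hAB : (w • (1 : Matrix (Fin 3) (Fin 3) ℂ)) * (w⁻¹ • 1) = 1 := by
    rw [Matrix.smul_mul, Matrix.mul_smul, smul_smul, Matrix.mul_one,
      mul_inv_cancel₀ hw0, one_smul]
  haveI : Invertible (w • (1 : Matrix (Fin 3) (Fin 3) ℂ)) :=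
    invertibleOfRightInverse _ _ hAB
  have hinv : ⅟ (w • (1 : Matrix (Fin 3) (Fin 3) ℂ)) = w⁻¹ • 1 :=
    invOf_eq_right_inv hAB
  -- Schur determinant
  rw [hN, Matrix.det_fromBlocks₁₁, hinv] at h0
  -- simplify the Schur complement
  have hC : (-(a • K)) * (w⁻¹ • (1 : Matrix (Fin 3) (Fin 3) ℂ)) * (a • K)
      = (w⁻¹ * t ^ 2) • (K * K) := by
    simp only [neg_mul, smul_mul_assoc, mul_smul_comm, smul_smul, Matrix.mul_one,
      ← neg_smul]
    congr 1
    linear_combination (-w⁻¹) * ha2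
  have hschur : (w • (1 : Matrix (Fin 3) (Fin 3) ℂ) - (t ^ 2) • K ^ 2)
      - (-(a • K)) * (w⁻¹ • (1 : Matrix (Fin 3) (Fin 3) ℂ)) * (a • K)
      = w • 1 - γ • (K * K) := by
    rw [hC, pow_two K, sub_sub, ← add_smul, hγ]
  rw [hschur] at h0
  -- explicit Schur complement matrix
  have hE : w • (1 : Matrix (Fin 3) (Fin 3) ℂ) - γ • (K * K) =
      !![w + γ*((ky:ℂ)^2+(kz:ℂ)^2), -(γ*(kx:ℂ)*(ky:ℂ)), -(γ*(kx:ℂ)*(kz:ℂ));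
         -(γ*(kx:ℂ)*(ky:ℂ)), w + γ*((kx:ℂ)^2+(kz:ℂ)^2), -(γ*(ky:ℂ)*(kz:ℂ));
         -(γ*(kx:ℂ)*(kz:ℂ)), -(γ*(ky:ℂ)*(kz:ℂ)), w + γ*((kx:ℂ)^2+(ky:ℂ)^2)] := by
    subst hK
    ext i j
    fin_cases i <;> fin_cases j <;>
      (simp [Matrix.mul_apply, Fin.sum_univ_succ, Matrix.one_apply]; push_cast; ring)
  have hdetE : (w • (1 : Matrix (Fin 3) (Fin 3) ℂ) - γ • (K * K)).det
      = w * (w + γ * s) ^ 2 := by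
    rw [hE, Matrix.det_fin_three, hs]
    simp only [Matrix.of_apply, Matrix.cons_val', Matrix.cons_val_zero, Matrix.cons_val_one, Matrix.cons_val_two, Matrix.empty_val', Matrix.cons_val_fin_one, Matrix.head_cons, Matrix.tail_cons, Matrix.head_fin_const]
    ring
  -- det (w•1) = w^3
  have hdetA : (w • (1 : Matrix (Fin 3) (Fin 3) ℂ)).det = w ^ 3 := by
    simp [Matrix.det_smul]
  rw [hdetE, hdetA] at h0
  -- extract scalar equation
  have hkey : w ^ 3 * (w * (w + γ * s) ^ 2) = 0 := h0
  have hzero : w + γ * s = 0 := by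
    have h1 := mul_eq_zero.mp hkey
    rcases h1 with h1 | h1
    · exact absurd (pow_eq_zero_iff (by norm_num) |>.mp h1) hw0
    · rcases mul_eq_zero.mp h1 with h2 | h2
      · exact absurd h2 hw0
      · exact pow_eq_zero_iff (by norm_num) |>.mp h2
  -- multiply by w : w^2 + t^2 * μ * s = 0
  have hquad : w ^ 2 + t ^ 2 * μ * s = 0 := by
    have hww : w * w⁻¹ = 1 := mul_inv_cancel₀ hw0
    have := congrArg (w * ·) hzero
    simp only [mul_zero] at this
    calc w ^ 2 + t ^ 2 * μ * s
        = w * (w + γ * s) + (1 - w * w⁻¹) * t ^ 2 * s := by rw [hγ, hw]; ring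
      _ = 0 := by rw [this, hww]; ring
  -- convert to the quadratic in μ
  set c : ℝ := 2 - Δt ^ 2 * (kx ^ 2 + ky ^ 2 + kz ^ 2) with hc
  have hquad' : μ ^ 2 - (c : ℂ) * μ + 1 = 0 := by
    rw [hc]
    push_cast
    rw [hw, ht, hs] at hquad
    linear_combination hquad
  -- bounds on c
  have hsR : (0 : ℝ) ≤ kx ^ 2 + ky ^ 2 + kz ^ 2 := by positivity
  have hs4 : Δt ^ 2 * (kx ^ 2 + ky ^ 2 + kz ^ 2) < 4 := by
    nlinarith [Real.sq_sqrt hsR, Real.sqrt_nonneg (kx ^ 2 + ky ^ 2 + kz ^ 2),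
      mul_nonneg hΔt.le (Real.sqrt_nonneg (kx ^ 2 + ky ^ 2 + kz ^ 2))]
  exact abs_eq_one_of_quad c (by rw [hc]; linarith) (by rw [hc]; nlinarith) μ hquad'
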